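/- The change of variables x₁ = ρσ₁, x₂ = ρ²σ₂, mapping (0,∞) × S¹ → ℝ² \ {0} (with (σ₁,σ₂) ∈ S¹), has Jacobian ρ²(1 + σ₂²) with respect to the measure dρ dσ, i.e., for f ∈ L¹(ℝ²), ∫_{ℝ²} f(x) dx = ∫_{S¹} ∫₀^∞ f(ρσ₁, ρ²σ₂) ρ² (1 + σ₂²) dρ dσ. -/

import Mathlib

open MeasureTheory Real

private theorem hasFDerivAt_pg (p : ℝ × ℝ) :
    HasFDerivAt (fun p : ℝ × ℝ => (p.2 * cos p.1, p.2 ^ 2 * sin p.1))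
      (LinearMap.toContinuousLinearMap (Matrix.toLin (Module.Basis.finTwoProd ℝ) (Module.Basis.finTwoProd ℝ)
        !![-p.2 * sin p.1, cos p.1; p.2 ^ 2 * cos p.1, 2 * p.2 * sin p.1])) p := by
  rw [Matrix.toLin_finTwoProd_toContinuousLinearMap]
  have h1 : HasFDerivAt (fun p : ℝ × ℝ => p.2 * cos p.1)
      (p.2 • (-sin p.1) • ContinuousLinearMap.fst ℝ ℝ ℝ +
        cos p.1 • ContinuousLinearMap.snd ℝ ℝ ℝ) p :=
    hasFDerivAt_snd.mul ((hasDerivAt_cos p.1).comp_hasFDerivAt p hasFDerivAt_fst)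
  have h2 : HasFDerivAt (fun p : ℝ × ℝ => p.2 ^ 2 * sin p.1)
      ((p.2 * p.2) • cos p.1 • ContinuousLinearMap.fst ℝ ℝ ℝ +
        (sin p.1 • p.2 • ContinuousLinearMap.snd ℝ ℝ ℝ +
          sin p.1 • p.2 • ContinuousLinearMap.snd ℝ ℝ ℝ)) p := by
    have := (hasFDerivAt_snd.mul hasFDerivAt_snd (𝕜 := ℝ) (x := p)).mul
      ((hasDerivAt_sin p.1).comp_hasFDerivAt p hasFDerivAt_fst)
    simpa [pow_two, smul_add, add_comm, Pi.mul_def, Function.comp_def] using this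
  refine (HasFDerivAt.prodMk h1 h2).congr_fderiv ?_
  apply ContinuousLinearMap.ext
  intro q
  apply Prod.ext <;> simp <;> ring

private theorem pg_injOn : Set.InjOn (fun p : ℝ × ℝ => (p.2 * cos p.1, p.2 ^ 2 * sin p.1))
    (Set.Ico 0 (2 * π) ×ˢ Set.Ioi (0 : ℝ)) := by
  rintro ⟨θ, ρ⟩ ⟨hθ, hρ⟩ ⟨θ', ρ'⟩ ⟨hθ', hρ'⟩ h
  simp only [Set.mem_Ico, Set.mem_Ioi] at hθ hρ hθ' hρ'
  simp only [Prod.mk.injEq] at h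
  obtain ⟨h1, h2⟩ := h
  have P := sin_sq_add_cos_sq θ
  have P' := sin_sq_add_cos_sq θ'
  have key : (ρ ^ 2 - ρ' ^ 2) * (ρ ^ 2 + ρ' ^ 2 - (ρ * cos θ) ^ 2) = 0 := by
    linear_combination (ρ ^ 2 * sin θ + ρ' ^ 2 * sin θ') * h2 +
      ρ' ^ 2 * (ρ * cos θ + ρ' * cos θ') * h1 - ρ ^ 4 * P + ρ' ^ 4 * P'
  have hpos : 0 < ρ ^ 2 + ρ' ^ 2 - (ρ * cos θ) ^ 2 := by
    nlinarith [sq_nonneg (ρ * sin θ), mul_pos hρ' hρ']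
  have hsq : ρ ^ 2 = ρ' ^ 2 := by
    rcases mul_eq_zero.1 key with h | h
    · linarith
    · linarith
  have hρρ' : ρ = ρ' := by
    have : (ρ - ρ') * (ρ + ρ') = 0 := by linear_combination hsq
    rcases mul_eq_zero.1 this with h | h
    · linarith
    · linarith
  subst hρρ'
  have hc : cos θ = cos θ' := mul_left_cancel₀ (ne_of_gt hρ) h1
  have hs : sin θ = sin θ' := by
    have h2' : ρ ^ 2 * sin θ = ρ ^ 2 * sin θ' := h2
    have : ρ ^ 2 ≠ 0 := by positivity
    exact mul_left_cancel₀ this h2'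
  have hang := Real.Angle.cos_sin_inj hc hs
  rw [Real.Angle.angle_eq_iff_two_pi_dvd_sub] at hang
  obtain ⟨k, hk⟩ := hang
  have hπ := Real.pi_pos
  have hk1 : (-1 : ℝ) < k := by nlinarith
  have hk2 : (k : ℝ) < 1 := by nlinarith
  have hk0 : k = 0 := by
    have e1 : (-1 : ℤ) < k := by exact_mod_cast hk1
    have e2 : k < (1 : ℤ) := by exact_mod_cast hk2
    omega
  subst hk0
  simp only [Int.cast_zero, mul_zero] at hk
  have : θ = θ' := by linarith
  simp [this]

private theorem pg_surj (x : ℝ × ℝ) (hx : x ≠ 0) :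
    x ∈ (fun p : ℝ × ℝ => (p.2 * cos p.1, p.2 ^ 2 * sin p.1)) ''
      (Set.Ico 0 (2 * π) ×ˢ Set.Ioi (0 : ℝ)) := by
  obtain ⟨a, b⟩ := x
  have hab : a ≠ 0 ∨ b ≠ 0 := by
    by_contra hcon
    push_neg at hcon
    exact hx (by simp [Prod.ext_iff, hcon.1, hcon.2])
  have hD : 0 < a ^ 4 + 4 * b ^ 2 := by
    rcases hab with ha | hb
    · have : 0 < a ^ 4 := by positivity
      nlinarith [sq_nonneg b]
    · have : 0 < b ^ 2 := by positivity
      nlinarith [sq_nonneg (a ^ 2)]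
  set D := Real.sqrt (a ^ 4 + 4 * b ^ 2) with hDdef
  have hD0 : 0 < D := Real.sqrt_pos.2 hD
  have hDsq : D ^ 2 = a ^ 4 + 4 * b ^ 2 := Real.sq_sqrt hD.le
  set t := (a ^ 2 + D) / 2 with htdef
  have ht0 : 0 < t := by positivity
  have htt : t ^ 2 = a ^ 2 * t + b ^ 2 := by
    rw [htdef]
    linear_combination hDsq / 4
  set ρ := Real.sqrt t with hρdef
  have hρ0 : 0 < ρ := Real.sqrt_pos.2 ht0
  have hρ2 : ρ ^ 2 = t := Real.sq_sqrt ht0.le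
  set z : ℂ := ⟨a / ρ, b / t⟩ with hzdef
  have h1 : ρ * ρ = t := by rw [← hρ2]; ring
  have habs : ‖z‖ = 1 := by
    rw [Complex.norm_def, Complex.normSq_mk]
    have e : a / ρ * (a / ρ) + b / t * (b / t) = 1 := by
      rw [div_mul_div_comm, div_mul_div_comm, h1]
      rw [div_add_div _ _ ht0.ne' (by positivity : t * t ≠ 0)]
      rw [div_eq_one_iff_eq (by positivity : t * (t * t) ≠ 0)]
      linear_combination (t + a * a) * htt - ((D + 2 * a ^ 2) / 4) * hDsq
    rw [e, Real.sqrt_one]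
  have hz0 : z ≠ 0 := by
    intro h
    rw [h] at habs
    simp at habs
  set θ₀ := Complex.arg z with hθ₀
  have hcos : cos θ₀ = a / ρ := by
    rw [hθ₀, Complex.cos_arg hz0, habs]
    simp [hzdef]
  have hsin : sin θ₀ = b / t := by
    rw [hθ₀, Complex.sin_arg, habs]
    simp [hzdef]
  have harg1 := Complex.arg_le_pi z
  have harg2 := Complex.neg_pi_lt_arg z
  have hπ := Real.pi_pos
  set θ := if 0 ≤ θ₀ then θ₀ else θ₀ + 2 * π with hθdef
  have hθmem : θ ∈ Set.Ico 0 (2 * π) := by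
    rw [hθdef]
    split_ifs with h
    · exact ⟨h, by linarith⟩
    · push_neg at h
      constructor <;> [linarith; linarith]
  have hcosθ : cos θ = a / ρ := by
    rw [hθdef]
    split_ifs with h
    · exact hcos
    · rw [Real.cos_add_two_pi]; exact hcos
  have hsinθ : sin θ = b / t := by
    rw [hθdef]
    split_ifs with h
    · exact hsin
    · rw [Real.sin_add_two_pi]; exact hsin
  refine ⟨(θ, ρ), ⟨hθmem, hρ0⟩, ?_⟩
  simp only [Prod.mk.injEq]
  constructor
  · rw [hcosθ]; field_simp
  · rw [hsinθ, hρ2]; field_simp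

theorem parabolic_polar_coordinates (f : ℝ × ℝ → ℝ) (hf : Integrable f) :
    ∫ x : ℝ × ℝ, f x =
      ∫ θ in Set.Ico 0 (2 * Real.pi), ∫ ρ in Set.Ioi (0 : ℝ),
        f (ρ * Real.cos θ, ρ ^ 2 * Real.sin θ) * ρ ^ 2 * (1 + Real.sin θ ^ 2) := by
  set g : ℝ × ℝ → ℝ × ℝ := fun p => (p.2 * cos p.1, p.2 ^ 2 * sin p.1) with hg
  set S : Set (ℝ × ℝ) := Set.Ico 0 (2 * π) ×ˢ Set.Ioi (0 : ℝ) with hSdef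
  have hSm : MeasurableSet S := measurableSet_Ico.prod measurableSet_Ioi
  set B : ℝ × ℝ → ℝ × ℝ →L[ℝ] ℝ × ℝ := fun p =>
    LinearMap.toContinuousLinearMap (Matrix.toLin (Module.Basis.finTwoProd ℝ) (Module.Basis.finTwoProd ℝ)
      !![-p.2 * sin p.1, cos p.1; p.2 ^ 2 * cos p.1, 2 * p.2 * sin p.1]) with hB
  have hder : ∀ p ∈ S, HasFDerivWithinAt g (B p) S p := fun p _ =>
    (hasFDerivAt_pg p).hasFDerivWithinAt
  have hdet : ∀ p : ℝ × ℝ, |(B p).det| = p.2 ^ 2 * (1 + sin p.1 ^ 2) := by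
    intro p
    have hd : (B p).det = -(p.2 ^ 2 * (1 + sin p.1 ^ 2)) := by
      have hcs := sin_sq_add_cos_sq p.1
      simp only [hB, LinearMap.det_toContinuousLinearMap, LinearMap.det_toLin,
        Matrix.det_fin_two_of]
      linear_combination (- p.2 ^ 2) * hcs
    rw [hd, abs_neg, abs_of_nonneg (by positivity)]
  have hfun : ∀ p : ℝ × ℝ, |(B p).det| • f (g p) =
      f (p.2 * cos p.1, p.2 ^ 2 * sin p.1) * p.2 ^ 2 * (1 + sin p.1 ^ 2) := by
    intro p
    rw [hdet, smul_eq_mul]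
    ring
  have haeq : g '' S =ᵐ[volume] (Set.univ : Set (ℝ × ℝ)) := by
    rw [Filter.eventuallyEq_set]
    have hsub : (g '' S)ᶜ ⊆ ({0} : Set (ℝ × ℝ)) := by
      intro x hx
      by_contra hx0
      exact hx (pg_surj x hx0)
    have h0 : (volume : Measure (ℝ × ℝ)) ({0} : Set (ℝ × ℝ)) = 0 := by
      rw [MeasureTheory.Measure.volume_eq_prod]
      have : ({0} : Set (ℝ × ℝ)) = ({0} : Set ℝ) ×ˢ ({0} : Set ℝ) := by
        ext p; simp [Prod.ext_iff]
      rw [this, MeasureTheory.Measure.prod_prod]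
      simp
    have := measure_mono_null hsub h0
    filter_upwards [measure_eq_zero_iff_ae_notMem.1 this] with x hx
    simp only [Set.mem_univ, iff_true]
    by_contra hmem
    exact hx hmem
  have hint : IntegrableOn (fun p : ℝ × ℝ =>
      f (p.2 * cos p.1, p.2 ^ 2 * sin p.1) * p.2 ^ 2 * (1 + sin p.1 ^ 2)) S := by
    have h1 := (integrableOn_image_iff_integrableOn_abs_det_fderiv_smul volume hSm hder
      pg_injOn f).1 hf.integrableOn
    have : (fun p => |(B p).det| • f (g p)) = fun p : ℝ × ℝ =>
        f (p.2 * cos p.1, p.2 ^ 2 * sin p.1) * p.2 ^ 2 * (1 + sin p.1 ^ 2) := funext hfun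
    rwa [this] at h1
  calc ∫ x : ℝ × ℝ, f x = ∫ x in Set.univ, f x := setIntegral_univ.symm
    _ = ∫ x in g '' S, f x := (setIntegral_congr_set haeq).symm
    _ = ∫ p in S, |(B p).det| • f (g p) :=
        integral_image_eq_integral_abs_det_fderiv_smul volume hSm hder pg_injOn f
    _ = ∫ p in S, f (p.2 * cos p.1, p.2 ^ 2 * sin p.1) * p.2 ^ 2 * (1 + sin p.1 ^ 2) := by
        congr 1
        exact funext hfun
    _ = ∫ θ in Set.Ico 0 (2 * Real.pi), ∫ ρ in Set.Ioi (0 : ℝ),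
        f (ρ * Real.cos θ, ρ ^ 2 * Real.sin θ) * ρ ^ 2 * (1 + Real.sin θ ^ 2) := by
        rw [hSdef, MeasureTheory.Measure.volume_eq_prod]
        exact setIntegral_prod _ (by rwa [← MeasureTheory.Measure.volume_eq_prod])
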